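/- If the approximate misfit Φ^a and the enhanced noise misfit Φ^e both belong to L¹_{μ_θ}, then ‖Φ^a − Φ^e‖_{L¹_{μ_θ}} ≤ 2^{−1/2} · |O m_ε|_{Σ_η^{−1}} · ( ‖Φ^a‖_{L¹_{μ_θ}}^{1/2} + C_e · ‖Φ^e‖_{L¹_{μ_θ}}^{1/2} ) + 2^{−1} · ‖ |y − O∘M − O m_ε|²_{Σ_η^{−1} − (Σ_η+S)^{−1}} ‖_{L¹_{μ_θ}}. -/

import Mathlib

open MeasureTheory Real Matrix

noncomputable def Matrix.PosSemidef.sqrt {n 𝕜 : Type*} [Fintype n] [RCLike 𝕜] [PartialOrder 𝕜]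
    [DecidableEq n]     {A : Matrix n n 𝕜} (hA : A.PosSemidef) : Matrix n n 𝕜 :=
  hA.1.eigenvectorUnitary.1 * diagonal ((↑) ∘ (√·) ∘ hA.1.eigenvalues) *
    (star hA.1.eigenvectorUnitary : Matrix n n 𝕜)

/-- The ℓ²→ℓ² operator norm of a real square matrix. -/
noncomputable def matOpNorm {n : ℕ} (A : Matrix (Fin n) (Fin n) ℝ) : ℝ :=
  ‖LinearMap.toContinuousLinearMap (Matrix.toEuclideanLin A)‖

section helpers
variable {n : ℕ}

lemma psd_sqrt_mul_self {n : ℕ} {P : Matrix (Fin n) (Fin n) ℝ} (hP : P.PosSemidef) :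
    hP.sqrt * hP.sqrt = P := by
  have hC : (star hP.1.eigenvectorUnitary : Matrix (Fin n) (Fin n) ℝ) *
      hP.1.eigenvectorUnitary.1 = 1 := Unitary.coe_star_mul_self _
  have key : hP.sqrt * hP.sqrt = hP.1.eigenvectorUnitary.1 *
      (diagonal ((↑) ∘ (√·) ∘ hP.1.eigenvalues) * diagonal ((↑) ∘ (√·) ∘ hP.1.eigenvalues)) *
      (star hP.1.eigenvectorUnitary : Matrix (Fin n) (Fin n) ℝ) := by
    simp only [Matrix.PosSemidef.sqrt, Matrix.mul_assoc]
    rw [← Matrix.mul_assoc _ _ (diagonal _ * _), hC, Matrix.one_mul]; rfl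
  rw [key, diagonal_mul_diagonal]
  conv_rhs => rw [hP.1.spectral_theorem]
  rw [Unitary.conjStarAlgAut_apply]
  congr 3
  funext i
  simp only [Function.comp_apply, RCLike.ofReal_real_eq_id, id]
  exact Real.mul_self_sqrt (hP.eigenvalues_nonneg i)

lemma psd_sqrt_transpose {n : ℕ} {P : Matrix (Fin n) (Fin n) ℝ} (hP : P.PosSemidef) :
    hP.sqrtᵀ = hP.sqrt := by
  rw [← Matrix.conjTranspose_eq_transpose_of_trivial]
  simp only [Matrix.PosSemidef.sqrt, Matrix.conjTranspose_mul, Matrix.mul_assoc,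
    diagonal_conjTranspose]
  simp [Matrix.star_eq_conjTranspose]

lemma dv_self_nonneg (u : Fin n → ℝ) : 0 ≤ u ⬝ᵥ u :=
  Finset.sum_nonneg fun i _ => mul_self_nonneg _

lemma norm_withLp (u : Fin n → ℝ) :
    ‖(WithLp.equiv 2 (Fin n → ℝ)).symm u‖ = Real.sqrt (u ⬝ᵥ u) := by
  rw [EuclideanSpace.norm_eq]
  congr 1
  simp [dotProduct, sq]

lemma dv_cs (u v : Fin n → ℝ) :
    |u ⬝ᵥ v| ≤ Real.sqrt (u ⬝ᵥ u) * Real.sqrt (v ⬝ᵥ v) := by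
  have h := abs_real_inner_le_norm ((WithLp.equiv 2 (Fin n → ℝ)).symm u)
      ((WithLp.equiv 2 (Fin n → ℝ)).symm v)
  rw [norm_withLp, norm_withLp] at h
  convert h using 2
  simp [PiLp.inner_apply, dotProduct, mul_comm]

lemma quad_factor {P : Matrix (Fin n) (Fin n) ℝ} (hP : P.PosSemidef) (u v : Fin n → ℝ) :
    u ⬝ᵥ (P *ᵥ v) = (hP.sqrt *ᵥ u) ⬝ᵥ (hP.sqrt *ᵥ v) := by
  have hs : hP.sqrtᵀ = hP.sqrt := by
    exact psd_sqrt_transpose hP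
  conv_lhs => rw [← psd_sqrt_mul_self hP, ← Matrix.mulVec_mulVec,
    dotProduct_mulVec, ← hs, Matrix.vecMul_transpose]
  rw [hs]

lemma quad_nonneg {P : Matrix (Fin n) (Fin n) ℝ} (hP : P.PosSemidef) (u : Fin n → ℝ) :
    0 ≤ u ⬝ᵥ (P *ᵥ u) := by
  rw [quad_factor hP]; exact dv_self_nonneg _

lemma mulVec_opnorm (M : Matrix (Fin n) (Fin n) ℝ) (v : Fin n → ℝ) :
    Real.sqrt ((M *ᵥ v) ⬝ᵥ (M *ᵥ v)) ≤ matOpNorm M * Real.sqrt (v ⬝ᵥ v) := by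
  have h := (LinearMap.toContinuousLinearMap (Matrix.toEuclideanLin M)).le_opNorm
      ((WithLp.equiv 2 (Fin n → ℝ)).symm v)
  have he : (LinearMap.toContinuousLinearMap (Matrix.toEuclideanLin M))
      ((WithLp.equiv 2 (Fin n → ℝ)).symm v) = (WithLp.equiv 2 (Fin n → ℝ)).symm (M *ᵥ v) := by
    simp [LinearMap.coe_toContinuousLinearMap', Matrix.toEuclideanLin_apply]
  rw [he, norm_withLp, norm_withLp] at h
  exact h

lemma quad_compare {Γ S : Matrix (Fin n) (Fin n) ℝ} (hΓ : Γ.PosDef) (hS : S.PosSemidef)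
    (e : Fin n → ℝ) :
    e ⬝ᵥ (Γ⁻¹ *ᵥ e) ≤
      (matOpNorm (hΓ.inv.posSemidef.sqrt * (hΓ.add_posSemidef hS).posSemidef.sqrt))^2 *
        (e ⬝ᵥ ((Γ + S)⁻¹ *ᵥ e)) := by
  set A := hΓ.inv.posSemidef.sqrt with hA
  set B := (hΓ.add_posSemidef hS).posSemidef.sqrt with hB
  have hBB : B * B = Γ + S := psd_sqrt_mul_self (hΓ.add_posSemidef hS).posSemidef
  have hBs : Bᵀ = B := by
    exact psd_sqrt_transpose (hΓ.add_posSemidef hS).posSemidef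
  have hdet : IsUnit B.det := by
    have h1 : IsUnit (B * B).det := by
      rw [hBB]; exact (hΓ.add_posSemidef hS).isUnit.map (Matrix.detMonoidHom)
    rw [Matrix.det_mul, IsUnit.mul_iff] at h1
    exact h1.1
  have hBinv : B * B⁻¹ = 1 := Matrix.mul_nonsing_inv B hdet
  set w := B⁻¹ *ᵥ e with hw
  have he : e = B *ᵥ w := by
    rw [hw, Matrix.mulVec_mulVec, hBinv, Matrix.one_mulVec]
  have hinv : (Γ + S)⁻¹ = B⁻¹ * B⁻¹ := by rw [← Matrix.mul_inv_rev, hBB]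
  have hww : e ⬝ᵥ ((Γ + S)⁻¹ *ᵥ e) = w ⬝ᵥ w := by
    have hBis : B⁻¹ᵀ = B⁻¹ := by rw [Matrix.transpose_nonsing_inv, hBs]
    rw [hinv, ← Matrix.mulVec_mulVec, dotProduct_mulVec, ← hBis,
      Matrix.vecMul_transpose, hBis]
  have hlhs : e ⬝ᵥ (Γ⁻¹ *ᵥ e) = ((A * B) *ᵥ w) ⬝ᵥ ((A * B) *ᵥ w) := by
    rw [quad_factor hΓ.inv.posSemidef, ← hA]
    conv_lhs => rw [he]
    rw [Matrix.mulVec_mulVec]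
  rw [hlhs, hww]
  have h := mulVec_opnorm (A * B) w
  have h0 : (0:ℝ) ≤ ((A * B) *ᵥ w) ⬝ᵥ ((A * B) *ᵥ w) := dv_self_nonneg _
  have h1 : (0:ℝ) ≤ w ⬝ᵥ w := dv_self_nonneg _
  calc ((A * B) *ᵥ w) ⬝ᵥ ((A * B) *ᵥ w)
      = (Real.sqrt (((A * B) *ᵥ w) ⬝ᵥ ((A * B) *ᵥ w)))^2 := by rw [Real.sq_sqrt h0]
    _ ≤ (matOpNorm (A * B) * Real.sqrt (w ⬝ᵥ w))^2 := by
        apply pow_le_pow_left₀ (Real.sqrt_nonneg _) h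
    _ = (matOpNorm (A * B))^2 * (w ⬝ᵥ w) := by
        rw [mul_pow, Real.sq_sqrt h1]

lemma sqrt_le_one_add (x : ℝ) : Real.sqrt x ≤ 1 + |x| := by
  have h1 : Real.sqrt x ≤ Real.sqrt ((1 + |x|)^2) := by
    apply Real.sqrt_le_sqrt
    have := abs_nonneg x
    nlinarith [le_abs_self x]
  rwa [Real.sqrt_sq (by positivity)] at h1

lemma integral_sqrt_abs_le {X : Type*} [MeasurableSpace X] {μ : Measure X}
    [IsProbabilityMeasure μ] {f : X → ℝ} (hf : Integrable f μ) :
    ∫ x, Real.sqrt |f x| ∂μ ≤ Real.sqrt (∫ x, |f x| ∂μ) := by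
  set g : X → ℝ := fun x => Real.sqrt |f x| with hg
  have hgm : AEStronglyMeasurable g μ :=
    (Real.continuous_sqrt.comp continuous_abs).comp_aestronglyMeasurable
      hf.aestronglyMeasurable
  have hgi : Integrable g μ := by
    refine Integrable.mono' ((integrable_const 1).add hf.abs) hgm ?_
    filter_upwards with x
    rw [Real.norm_eq_abs, abs_of_nonneg (Real.sqrt_nonneg _)]
    simpa [abs_abs] using sqrt_le_one_add |f x|
  have hg2 : ∀ x, g x ^ 2 = |f x| := fun x => Real.sq_sqrt (abs_nonneg _)
  set I := ∫ x, g x ∂μ with hI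
  have hI0 : 0 ≤ I := integral_nonneg fun x => Real.sqrt_nonneg _
  have hvar : 0 ≤ ∫ x, (g x - I)^2 ∂μ := integral_nonneg fun x => sq_nonneg _
  have hexp : ∫ x, (g x - I)^2 ∂μ = (∫ x, |f x| ∂μ) - I^2 := by
    have : ∀ x, (g x - I)^2 = |f x| - (2*I) * g x + I^2 := by
      intro x; rw [← hg2 x]; ring
    simp_rw [this]
    have h1 : Integrable (fun x => |f x| - 2 * I * g x) μ := by
      exact hf.abs.sub (hgi.const_mul _)
    have h2 : Integrable (fun x => (2 * I) * g x) μ := hgi.const_mul _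
    rw [integral_add h1 (integrable_const _),
      integral_sub hf.abs h2, MeasureTheory.integral_const_mul, integral_const]
    simp only [measure_univ, probReal_univ, ENNReal.toReal_one, smul_eq_mul, one_mul]
    ring
  have hIle : I^2 ≤ ∫ x, |f x| ∂μ := by linarith [hvar.trans_eq hexp]
  calc I = Real.sqrt (I^2) := (Real.sqrt_sq hI0).symm
    _ ≤ Real.sqrt (∫ x, |f x| ∂μ) := Real.sqrt_le_sqrt hIle

end helpers

lemma pointwise_bound {n : ℕ} {Γ S : Matrix (Fin n) (Fin n) ℝ} (hΓ : Γ.PosDef)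
    (hS : S.PosSemidef) (Ce : ℝ)
    (hCe : Ce = matOpNorm (hΓ.inv.posSemidef.sqrt * (hΓ.add_posSemidef hS).posSemidef.sqrt))
    (d m : Fin n → ℝ) :
    |(1/2) * (d ⬝ᵥ (Γ⁻¹ *ᵥ d)) - (1/2) * ((d - m) ⬝ᵥ ((Γ + S)⁻¹ *ᵥ (d - m)))| ≤
      (Real.sqrt 2)⁻¹ * Real.sqrt (m ⬝ᵥ (Γ⁻¹ *ᵥ m)) *
        (Real.sqrt |(1/2) * (d ⬝ᵥ (Γ⁻¹ *ᵥ d))| +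
          Ce * Real.sqrt |(1/2) * ((d - m) ⬝ᵥ ((Γ + S)⁻¹ *ᵥ (d - m)))|) +
      (1/2) * |((d - m) ⬝ᵥ (Γ⁻¹ *ᵥ (d - m))) - ((d - m) ⬝ᵥ ((Γ + S)⁻¹ *ᵥ (d - m)))| := by
  have hP : Γ⁻¹.PosSemidef := hΓ.inv.posSemidef
  have hQ : (Γ + S)⁻¹.PosSemidef := (hΓ.add_posSemidef hS).inv.posSemidef
  have hCe0 : 0 ≤ Ce := hCe ▸ norm_nonneg _
  set e : Fin n → ℝ := d - m with he
  set qd := d ⬝ᵥ (Γ⁻¹ *ᵥ d) with hqd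
  set qe := e ⬝ᵥ (Γ⁻¹ *ᵥ e) with hqe
  set qe' := e ⬝ᵥ ((Γ + S)⁻¹ *ᵥ e) with hqe'
  set qm := m ⬝ᵥ (Γ⁻¹ *ᵥ m) with hqm
  have h1 : 0 ≤ qd := quad_nonneg hP d
  have h2 : 0 ≤ qe' := quad_nonneg hQ e
  have h4 : 0 ≤ qm := quad_nonneg hP m
  have hsym : ∀ u v : Fin n → ℝ, u ⬝ᵥ (Γ⁻¹ *ᵥ v) = v ⬝ᵥ (Γ⁻¹ *ᵥ u) := fun u v => by
    rw [quad_factor hP, quad_factor hP, dotProduct_comm]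
  have hd : d = e + m := by rw [he]; abel
  have hmd : m ⬝ᵥ (Γ⁻¹ *ᵥ d) = m ⬝ᵥ (Γ⁻¹ *ᵥ e) + m ⬝ᵥ (Γ⁻¹ *ᵥ m) := by
    conv_lhs => rw [hd]
    rw [Matrix.mulVec_add, dotProduct_add]
  have hqde : qd = qe + (m ⬝ᵥ (Γ⁻¹ *ᵥ e) + m ⬝ᵥ (Γ⁻¹ *ᵥ d)) := by
    conv_lhs => rw [hqd, hd]
    rw [Matrix.mulVec_add, dotProduct_add, add_dotProduct,
      add_dotProduct, hsym e m, hmd]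
    ring
  -- Cauchy-Schwarz bounds
  have hc1 : |m ⬝ᵥ (Γ⁻¹ *ᵥ d)| ≤ Real.sqrt qm * Real.sqrt qd := by
    calc |m ⬝ᵥ (Γ⁻¹ *ᵥ d)| = |(hP.sqrt *ᵥ m) ⬝ᵥ (hP.sqrt *ᵥ d)| := by rw [quad_factor hP]
      _ ≤ Real.sqrt ((hP.sqrt *ᵥ m) ⬝ᵥ (hP.sqrt *ᵥ m)) *
          Real.sqrt ((hP.sqrt *ᵥ d) ⬝ᵥ (hP.sqrt *ᵥ d)) := dv_cs _ _
      _ = Real.sqrt qm * Real.sqrt qd := by rw [hqm, hqd, quad_factor hP m m, quad_factor hP d d]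
  have hc2' : |m ⬝ᵥ (Γ⁻¹ *ᵥ e)| ≤ Real.sqrt qm * Real.sqrt qe := by
    calc |m ⬝ᵥ (Γ⁻¹ *ᵥ e)| = |(hP.sqrt *ᵥ m) ⬝ᵥ (hP.sqrt *ᵥ e)| := by rw [quad_factor hP]
      _ ≤ Real.sqrt ((hP.sqrt *ᵥ m) ⬝ᵥ (hP.sqrt *ᵥ m)) *
          Real.sqrt ((hP.sqrt *ᵥ e) ⬝ᵥ (hP.sqrt *ᵥ e)) := dv_cs _ _
      _ = Real.sqrt qm * Real.sqrt qe := by rw [hqm, hqe, quad_factor hP m m, quad_factor hP e e]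
  have hcomp : Real.sqrt qe ≤ Ce * Real.sqrt qe' := by
    have h := quad_compare hΓ hS e
    rw [← hCe] at h
    calc Real.sqrt qe ≤ Real.sqrt (Ce^2 * qe') := Real.sqrt_le_sqrt h
      _ = Ce * Real.sqrt qe' := by
          rw [Real.sqrt_mul (sq_nonneg _), Real.sqrt_sq hCe0]
  have hc2 : |m ⬝ᵥ (Γ⁻¹ *ᵥ e)| ≤ Real.sqrt qm * (Ce * Real.sqrt qe') :=
    hc2'.trans (by gcongr)
  -- simplify sqrt of halves
  have habs1 : Real.sqrt |(1/2) * qd| = (Real.sqrt 2)⁻¹ * Real.sqrt qd := by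
    rw [abs_of_nonneg (by positivity), Real.sqrt_mul (by norm_num : (0:ℝ) ≤ 1/2),
      show (1/2 : ℝ) = 2⁻¹ by norm_num, Real.sqrt_inv]
  have habs2 : Real.sqrt |(1/2) * qe'| = (Real.sqrt 2)⁻¹ * Real.sqrt qe' := by
    rw [abs_of_nonneg (by positivity), Real.sqrt_mul (by norm_num : (0:ℝ) ≤ 1/2),
      show (1/2 : ℝ) = 2⁻¹ by norm_num, Real.sqrt_inv]
  rw [habs1, habs2]
  have h22 : ((Real.sqrt 2)⁻¹ : ℝ) * (Real.sqrt 2)⁻¹ = 1/2 := by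
    rw [← mul_inv, Real.mul_self_sqrt (by norm_num)]
    norm_num
  have hlhs : |(1/2) * qd - (1/2) * qe'| ≤
      (1/2) * |m ⬝ᵥ (Γ⁻¹ *ᵥ d)| + (1/2) * |m ⬝ᵥ (Γ⁻¹ *ᵥ e)| + (1/2) * |qe - qe'| := by
    have hid : (1/2) * qd - (1/2) * qe' =
        ((1/2) * (m ⬝ᵥ (Γ⁻¹ *ᵥ e)) + (1/2) * (m ⬝ᵥ (Γ⁻¹ *ᵥ d))) + (1/2) * (qe - qe') := by
      rw [hqde]; ring
    rw [hid]
    calc |((1/2) * (m ⬝ᵥ (Γ⁻¹ *ᵥ e)) + (1/2) * (m ⬝ᵥ (Γ⁻¹ *ᵥ d))) + (1/2) * (qe - qe')|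
        ≤ |(1/2) * (m ⬝ᵥ (Γ⁻¹ *ᵥ e)) + (1/2) * (m ⬝ᵥ (Γ⁻¹ *ᵥ d))| + |(1/2) * (qe - qe')| :=
          abs_add_le _ _
      _ ≤ (|(1/2) * (m ⬝ᵥ (Γ⁻¹ *ᵥ e))| + |(1/2) * (m ⬝ᵥ (Γ⁻¹ *ᵥ d))|) + |(1/2) * (qe - qe')| :=
          by gcongr; exact abs_add_le _ _
      _ = (1/2) * |m ⬝ᵥ (Γ⁻¹ *ᵥ d)| + (1/2) * |m ⬝ᵥ (Γ⁻¹ *ᵥ e)| + (1/2) * |qe - qe'| := by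
          rw [abs_mul, abs_mul, abs_mul, abs_of_nonneg (by norm_num : (0:ℝ) ≤ 1/2)]
          ring
  refine hlhs.trans ?_
  have hsm : 0 ≤ Real.sqrt qm := Real.sqrt_nonneg _
  have hsd : 0 ≤ Real.sqrt qd := Real.sqrt_nonneg _
  have hse : 0 ≤ Real.sqrt qe' := Real.sqrt_nonneg _
  nlinarith [hc1, hc2, abs_nonneg (m ⬝ᵥ (Γ⁻¹ *ᵥ d)), abs_nonneg (m ⬝ᵥ (Γ⁻¹ *ᵥ e)),
    mul_le_mul_of_nonneg_left hc1 (by positivity : (0:ℝ) ≤ 1/2),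
    mul_le_mul_of_nonneg_left hc2 (by positivity : (0:ℝ) ≤ 1/2), h22]

lemma integrable_sqrt_abs {X : Type*} [MeasurableSpace X] {μ : Measure X}
    [IsFiniteMeasure μ] {f : X → ℝ} (hf : Integrable f μ) :
    Integrable (fun x => Real.sqrt |f x|) μ := by
  refine Integrable.mono' ((integrable_const 1).add hf.abs)
    ((Real.continuous_sqrt.comp continuous_abs).comp_aestronglyMeasurable
      hf.aestronglyMeasurable) ?_
  filter_upwards with x
  rw [Real.norm_eq_abs, abs_of_nonneg (Real.sqrt_nonneg _)]
  simpa [abs_abs] using sqrt_le_one_add |f x|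


theorem stmt7 {X U : Type*} [MeasurableSpace X] [NormedAddCommGroup U] [NormedSpace ℝ U]
    [CompleteSpace U] [MeasurableSpace U] [BorelSpace U]
    (μ : Measure X) [IsProbabilityMeasure μ] {n : ℕ}
    (Mappr : X → U) (hMappr : Measurable Mappr)
    (O : U →L[ℝ] (Fin n → ℝ)) (y : Fin n → ℝ) (mε : U)
    (Γ : Matrix (Fin n) (Fin n) ℝ) (hΓ : Γ.PosDef)
    (S : Matrix (Fin n) (Fin n) ℝ) (hS : S.PosSemidef)
    (Ce : ℝ)
    (hCe : Ce = matOpNorm (hΓ.inv.posSemidef.sqrt * (hΓ.add_posSemidef hS).posSemidef.sqrt))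
    (Φappr Φenh : X → ℝ)
    (hΦappr : Φappr = fun θ => (1/2) * ((y - O (Mappr θ)) ⬝ᵥ (Γ⁻¹ *ᵥ (y - O (Mappr θ)))))
    (hΦenh : Φenh = fun θ => (1/2) *
      ((y - O (Mappr θ) - O mε) ⬝ᵥ ((Γ + S)⁻¹ *ᵥ (y - O (Mappr θ) - O mε))))
    (hia : Integrable Φappr μ) (hie : Integrable Φenh μ) :
    ∫ θ, |Φappr θ - Φenh θ| ∂μ ≤
      (Real.sqrt 2)⁻¹ * Real.sqrt ((O mε) ⬝ᵥ (Γ⁻¹ *ᵥ (O mε))) *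
        (Real.sqrt (∫ θ, |Φappr θ| ∂μ) + Ce * Real.sqrt (∫ θ, |Φenh θ| ∂μ)) +
      (1/2) * ∫ θ,
        |((y - O (Mappr θ) - O mε) ⬝ᵥ (Γ⁻¹ *ᵥ (y - O (Mappr θ) - O mε))) -
          ((y - O (Mappr θ) - O mε) ⬝ᵥ ((Γ + S)⁻¹ *ᵥ (y - O (Mappr θ) - O mε)))| ∂μ := by
  have hP : Γ⁻¹.PosSemidef := hΓ.inv.posSemidef
  have hQ : (Γ + S)⁻¹.PosSemidef := (hΓ.add_posSemidef hS).inv.posSemidef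
  have hCe0 : 0 ≤ Ce := hCe ▸ norm_nonneg _
  set c2 : ℝ := (Real.sqrt 2)⁻¹ * Real.sqrt ((O mε) ⬝ᵥ (Γ⁻¹ *ᵥ (O mε))) with hc2
  have hc20 : 0 ≤ c2 := by positivity
  set ev : X → (Fin n → ℝ) := fun θ => y - O (Mappr θ) - O mε with hev
  set Δ : X → ℝ := fun θ =>
    ((ev θ) ⬝ᵥ (Γ⁻¹ *ᵥ (ev θ))) - ((ev θ) ⬝ᵥ ((Γ + S)⁻¹ *ᵥ (ev θ))) with hΔ
  -- pointwise bound
  have hpt : ∀ θ, |Φappr θ - Φenh θ| ≤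
      c2 * (Real.sqrt |Φappr θ| + Ce * Real.sqrt |Φenh θ|) + (1/2) * |Δ θ| := by
    intro θ
    simp only [hΦappr, hΦenh, hΔ, hev, hc2]
    exact pointwise_bound hΓ hS Ce hCe (y - O (Mappr θ)) (O mε)
  -- measurability of Δ
  have hem : Measurable ev :=
    (measurable_const.sub (O.continuous.measurable.comp hMappr)).sub measurable_const
  have hquad_cont : ∀ (M : Matrix (Fin n) (Fin n) ℝ),
      Continuous (fun v : Fin n → ℝ => v ⬝ᵥ (M *ᵥ v)) := by
    intro M
    simp only [dotProduct, Matrix.mulVec]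
    exact continuous_finset_sum _ fun i _ => (continuous_apply i).mul
      (continuous_finset_sum _ fun j _ => continuous_const.mul (continuous_apply j))
  have hΔm : Measurable Δ :=
    ((hquad_cont Γ⁻¹).measurable.comp hem).sub ((hquad_cont (Γ + S)⁻¹).measurable.comp hem)
  have hΔi : Integrable Δ μ := by
    refine (hie.const_mul (2 * (Ce^2 + 1))).mono' hΔm.aestronglyMeasurable ?_
    filter_upwards with θ
    rw [Real.norm_eq_abs]
    have h1 : 0 ≤ (ev θ) ⬝ᵥ (Γ⁻¹ *ᵥ (ev θ)) := quad_nonneg hP _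
    have h2 : 0 ≤ (ev θ) ⬝ᵥ ((Γ + S)⁻¹ *ᵥ (ev θ)) := quad_nonneg hQ _
    have h3 : (ev θ) ⬝ᵥ (Γ⁻¹ *ᵥ (ev θ)) ≤ Ce^2 * ((ev θ) ⬝ᵥ ((Γ + S)⁻¹ *ᵥ (ev θ))) :=
      hCe ▸ quad_compare hΓ hS _
    have hΦ : Φenh θ = (1/2) * ((ev θ) ⬝ᵥ ((Γ + S)⁻¹ *ᵥ (ev θ))) := by rw [hΦenh]
    rw [hΔ, abs_le]
    constructor <;> nlinarith [sq_nonneg Ce]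
  -- integrable majorant
  have hsa : Integrable (fun θ => Real.sqrt |Φappr θ|) μ := integrable_sqrt_abs hia
  have hse : Integrable (fun θ => Real.sqrt |Φenh θ|) μ := integrable_sqrt_abs hie
  have hG : Integrable (fun θ => Real.sqrt |Φappr θ| + Ce * Real.sqrt |Φenh θ|) μ :=
    hsa.add (hse.const_mul Ce)
  have hF : Integrable
      (fun θ => c2 * (Real.sqrt |Φappr θ| + Ce * Real.sqrt |Φenh θ|) + (1/2) * |Δ θ|) μ :=
    (hG.const_mul c2).add (hΔi.abs.const_mul (1/2))
  calc ∫ θ, |Φappr θ - Φenh θ| ∂μ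
      ≤ ∫ θ, (c2 * (Real.sqrt |Φappr θ| + Ce * Real.sqrt |Φenh θ|) + (1/2) * |Δ θ|) ∂μ :=
        integral_mono (hia.sub hie).abs hF hpt
    _ = c2 * ((∫ θ, Real.sqrt |Φappr θ| ∂μ) + Ce * ∫ θ, Real.sqrt |Φenh θ| ∂μ) +
        (1/2) * ∫ θ, |Δ θ| ∂μ := by
        rw [integral_add (hG.const_mul c2) (hΔi.abs.const_mul (1/2)),
          MeasureTheory.integral_const_mul, MeasureTheory.integral_const_mul,
          integral_add hsa (hse.const_mul Ce), MeasureTheory.integral_const_mul]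
    _ ≤ c2 * (Real.sqrt (∫ θ, |Φappr θ| ∂μ) + Ce * Real.sqrt (∫ θ, |Φenh θ| ∂μ)) +
        (1/2) * ∫ θ, |Δ θ| ∂μ := by
        gcongr
        · exact integral_sqrt_abs_le hia
        · exact integral_sqrt_abs_le hie
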